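/- arXiv:2208.12375 — 2 statements merged into one kernel-verified Lean document; each statement's English description precedes it below -/
import Mathlib

section
/- For every n, the (n+1)×(n+1) matrix whose (m,k) entry (0 ≤ m,k ≤ n) is the Stirling number of the second kind S(m,k) is totally non-negative. -/
open Polynomial Finset

/-- A real square matrix is totally non-negative if every minor (determinant of a
square submatrix selected by strictly increasing row indices and strictly increasing
column indices) is non-negative. -/
def TNN {N : ℕ} (A : Matrix (Fin N) (Fin N) ℝ) : Prop :=
  ∀ (r : ℕ) (ρ γ : Fin r → Fin N), StrictMono ρ → StrictMono γ →
    0 ≤ (A.submatrix ρ γ).det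

/-- `stirling2 m k`, the Stirling number of the second kind: the number of
partitions of an `m`-element set into `k` non-empty blocks. -/
noncomputable def stirling2 (m k : ℕ) : ℕ :=
  Nat.card {P : Finpartition (Finset.univ : Finset (Fin m)) // P.parts.card = k}

lemma cauchy_binet_fiber {r N : ℕ} (A : Matrix (Fin r) (Fin N) ℝ) (B : Matrix (Fin N) (Fin r) ℝ)
    (s : Finset (Fin N)) (hs : s.card = r) :
    ∑ f ∈ (univ.filter (fun f : Fin r → Fin N => Function.Injective f)).filter
        (fun f => Finset.image f univ = s),
      (∏ i, A i (f i)) * (B.submatrix f id).det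
    = (A.submatrix id (s.orderEmbOfFin hs : Fin r → Fin N)).det
      * (B.submatrix (s.orderEmbOfFin hs : Fin r → Fin N) id).det := by
  set g : Fin r → Fin N := (s.orderEmbOfFin hs : Fin r → Fin N) with hg
  have hginj : Function.Injective g := (s.orderEmbOfFin hs).injective
  have himg : Finset.image g univ = s := by
    apply Finset.eq_of_subset_of_card_le
    · intro x hx
      simp only [Finset.mem_image] at hx
      obtain ⟨i, _, rfl⟩ := hx
      exact Finset.orderEmbOfFin_mem s hs i
    · rw [Finset.card_image_of_injective _ hginj, Finset.card_univ, Fintype.card_fin, hs]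
  have key : ∑ f ∈ (univ.filter (fun f : Fin r → Fin N => Function.Injective f)).filter
        (fun f => Finset.image f univ = s),
      (∏ i, A i (f i)) * (B.submatrix f id).det
      = ∑ σ : Equiv.Perm (Fin r),
        (∏ i, A i (g (σ i))) * (B.submatrix (g ∘ σ) id).det := by
    refine (Finset.sum_nbij (fun σ : Equiv.Perm (Fin r) => g ∘ σ) ?_ ?_ ?_ ?_).symm
    · intro σ _
      simp only [Finset.mem_filter, Finset.mem_univ, true_and]
      constructor
      · exact hginj.comp σ.injective
      · rw [← himg]
        ext x
        simp only [Finset.mem_image, Function.comp_apply]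
        constructor
        · rintro ⟨i, _, rfl⟩; exact ⟨σ i, Finset.mem_univ _, rfl⟩
        · rintro ⟨i, _, rfl⟩; exact ⟨σ.symm i, Finset.mem_univ _, by simp⟩
    · intro σ _ σ' _ h
      exact Equiv.ext fun i => hginj (congrFun h i)
    · rintro f hf
      simp only [Finset.coe_filter, Set.mem_setOf_eq, Finset.mem_filter, Finset.mem_univ,
        true_and] at hf
      obtain ⟨hfinj, hfimg⟩ := hf
      have hmem : ∀ x, f x ∈ s := fun x => by
        rw [← hfimg]; exact Finset.mem_image_of_mem f (Finset.mem_univ x)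
      set τ : Fin r → Fin r := fun x => (s.orderIsoOfFin hs).symm ⟨f x, hmem x⟩ with hτ
      have hτinj : Function.Injective τ := by
        intro a b hab
        apply hfinj
        have := congrArg (fun z => ((s.orderIsoOfFin hs) z : Fin N)) hab
        simpa [hτ] using this
      have hτbij : Function.Bijective τ := Finite.injective_iff_bijective.mp hτinj
      refine ⟨Equiv.ofBijective τ hτbij, Finset.mem_coe.mpr (Finset.mem_univ _), ?_⟩
      funext x
      simp only [Function.comp_apply, Equiv.ofBijective_apply, hτ]
      show g ((s.orderIsoOfFin hs).symm ⟨f x, hmem x⟩) = f x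
      have : ∀ y : Fin r, g y = ((s.orderIsoOfFin hs) y : Fin N) := fun y => rfl
      rw [this, OrderIso.apply_symm_apply]
    · intro σ _
      rfl
  rw [key]
  have hsub : ∀ σ : Equiv.Perm (Fin r),
      (B.submatrix (g ∘ σ) id).det
        = (Equiv.Perm.sign σ : ℝ) * (B.submatrix g id).det := by
    intro σ
    have : B.submatrix (g ∘ σ) id = (B.submatrix g id).submatrix σ id := by
      rw [Matrix.submatrix_submatrix]; rfl
    rw [this, Matrix.det_permute]
  calc ∑ σ : Equiv.Perm (Fin r), (∏ i, A i (g (σ i))) * (B.submatrix (g ∘ σ) id).det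
      = (∑ σ : Equiv.Perm (Fin r), (Equiv.Perm.sign σ : ℝ) * ∏ i, A i (g (σ i)))
        * (B.submatrix g id).det := by
        rw [Finset.sum_mul]
        refine Finset.sum_congr rfl fun σ _ => ?_
        rw [hsub σ]; ring
    _ = (A.submatrix id g).det * (B.submatrix g id).det := by
        congr 1
        rw [← Matrix.det_transpose (A.submatrix id g), Matrix.det_apply']
        rfl

lemma det_expand {r N : ℕ} (A : Matrix (Fin r) (Fin N) ℝ) (B : Matrix (Fin N) (Fin r) ℝ) :
    (A * B).det = ∑ f : Fin r → Fin N, (∏ i, A i (f i)) * (B.submatrix f id).det := by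
  have h1 : (A * B).det = Matrix.detRowAlternating (fun i => ∑ x : Fin N, A i x • B x) := by
    congr 1
    funext i j
    simp [Matrix.mul_apply, Finset.sum_apply]
  rw [h1]
  rw [show (Matrix.detRowAlternating (fun i => ∑ x : Fin N, A i x • B x) : ℝ)
      = Matrix.detRowAlternating.toMultilinearMap (fun i => ∑ x : Fin N, A i x • B x) from rfl,
    MultilinearMap.map_sum]
  refine Finset.sum_congr rfl fun f _ => ?_
  have : Matrix.detRowAlternating.toMultilinearMap (fun i => A i (f i) • B (f i))
      = (∏ i, A i (f i)) • Matrix.detRowAlternating.toMultilinearMap (fun i => B (f i)) :=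
    MultilinearMap.map_smul_univ _ _ _
  rw [this]
  rw [smul_eq_mul]
  congr 1

lemma TNN.mul {N : ℕ} {A B : Matrix (Fin N) (Fin N) ℝ} (hA : TNN A) (hB : TNN B) :
    TNN (A * B) := by
  intro r ρ γ hρ hγ
  rw [Matrix.submatrix_mul A B ρ id γ Function.bijective_id]
  set A' := A.submatrix ρ id with hA'
  set B' := B.submatrix id γ with hB'
  rw [det_expand]
  rw [← Finset.sum_subset (Finset.filter_subset
      (fun f : Fin r → Fin N => Function.Injective f) univ) ?_]
  swap
  · intro f _ hf
    simp only [Finset.mem_filter, Finset.mem_univ, true_and] at hf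
    rw [Function.not_injective_iff] at hf
    obtain ⟨i, j, hij, hne⟩ := hf
    have : (B'.submatrix f id).det = 0 := by
      refine Matrix.det_zero_of_row_eq hne ?_
      funext k
      simp [Matrix.submatrix_apply, hij]
    rw [this, mul_zero]
  rw [← Finset.sum_fiberwise_of_maps_to (g := fun f : Fin r → Fin N => Finset.image f univ)
      (t := Finset.powersetCard r (univ : Finset (Fin N))) ?_]
  swap
  · intro f hf
    simp only [Finset.mem_filter, Finset.mem_univ, true_and] at hf
    rw [Finset.mem_powersetCard]
    exact ⟨Finset.subset_univ _, by
      rw [Finset.card_image_of_injective _ hf, Finset.card_univ, Fintype.card_fin]⟩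
  refine Finset.sum_nonneg fun s hsmem => ?_
  rw [Finset.mem_powersetCard] at hsmem
  obtain ⟨-, hs⟩ := hsmem
  rw [cauchy_binet_fiber A' B' s hs]
  have hgm : StrictMono (s.orderEmbOfFin hs : Fin r → Fin N) := (s.orderEmbOfFin hs).strictMono
  have h1 : A'.submatrix id (s.orderEmbOfFin hs : Fin r → Fin N)
      = A.submatrix ρ (s.orderEmbOfFin hs : Fin r → Fin N) := by
    rw [hA', Matrix.submatrix_submatrix]; rfl
  have h2 : B'.submatrix (s.orderEmbOfFin hs : Fin r → Fin N) id
      = B.submatrix (s.orderEmbOfFin hs : Fin r → Fin N) γ := by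
    rw [hB', Matrix.submatrix_submatrix]; rfl
  rw [h1, h2]
  exact mul_nonneg (hA r ρ _ hρ hgm) (hB r _ γ hgm hγ)

lemma TNN_bidiag {N : ℕ} (L : Matrix (Fin N) (Fin N) ℝ)
    (h0 : ∀ i j, 0 ≤ L i j)
    (hsupp : ∀ i j : Fin N, L i j ≠ 0 → (j : ℕ) ≤ (i : ℕ) ∧ (i : ℕ) ≤ (j : ℕ) + 1) :
    TNN L := by
  intro r ρ γ hρ hγ
  rw [Matrix.det_apply]
  rw [Finset.sum_eq_single (1 : Equiv.Perm (Fin r))]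
  · simp only [Equiv.Perm.sign_one, one_smul, Equiv.Perm.one_apply]
    exact Finset.prod_nonneg fun i _ => h0 _ _
  · intro σ _ hσ
    have hprod : (∏ i, (L.submatrix ρ γ) (σ i) i) = 0 := by
      by_contra hne
      replace hne := Finset.prod_ne_zero_iff.mp hne
      have hcond : ∀ i : Fin r, (γ i : ℕ) ≤ (ρ (σ i) : ℕ) ∧ (ρ (σ i) : ℕ) ≤ (γ i : ℕ) + 1 :=
        fun i => hsupp _ _ (hne i (Finset.mem_univ i))
      -- find minimal non-fixed point
      have hex : ∃ x, σ x ≠ x := by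
        by_contra hall
        push_neg at hall
        exact hσ (Equiv.ext hall)
      set T := univ.filter (fun x => σ x ≠ x) with hT
      have hTne : T.Nonempty := by
        obtain ⟨x, hx⟩ := hex
        exact ⟨x, by simp [hT, hx]⟩
      set a := T.min' hTne with ha
      have haT : a ∈ T := T.min'_mem hTne
      have hane : σ a ≠ a := by simpa [hT] using haT
      have hmin : ∀ x, x < a → σ x = x := by
        intro x hx
        by_contra hxx
        exact absurd (T.min'_le x (by simp [hT, hxx])) (not_le.mpr hx)
      have hσa : a < σ a := by
        rcases lt_trichotomy (σ a) a with h | h | h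
        · exact absurd (σ.injective (hmin (σ a) h)) hane
        · exact absurd h hane
        · exact h
      have hσia : a < σ⁻¹ a := by
        have h1 : σ⁻¹ a ≠ a := by
          intro h
          apply hane
          nth_rewrite 1 [← h]
          exact σ.apply_symm_apply a
        rcases lt_trichotomy (σ⁻¹ a) a with h | h | h
        · exfalso
          have h2 := hmin _ h
          rw [show σ (σ⁻¹ a) = a from σ.apply_symm_apply a] at h2
          exact h1 h2.symm
        · exact absurd h h1
        · exact h
      -- contradictions
      have e1 := hcond (σ⁻¹ a)
      rw [show σ (σ⁻¹ a) = a from σ.apply_symm_apply a] at e1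
      have e2 := hcond a
      have g1 : (γ a : ℕ) < (γ (σ⁻¹ a) : ℕ) := hγ hσia
      have g2 : (ρ a : ℕ) < (ρ (σ a) : ℕ) := hρ hσa
      omega
    rw [hprod, smul_zero]
  · intro h
    exact absurd (Finset.mem_univ _) h

section Embed

def embed {N : ℕ} (M : Matrix (Fin N) (Fin N) ℝ) : Matrix (Fin (N+1)) (Fin (N+1)) ℝ :=
  Matrix.of fun i j =>
    Fin.cases (Fin.cases (1 : ℝ) (fun _ => 0) j) (fun i' => Fin.cases 0 (fun j' => M i' j') j) i

@[simp] lemma embed_zero_zero {N : ℕ} (M : Matrix (Fin N) (Fin N) ℝ) : embed M 0 0 = 1 := rfl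
@[simp] lemma embed_zero_succ {N : ℕ} (M : Matrix (Fin N) (Fin N) ℝ) (j : Fin N) :
    embed M 0 j.succ = 0 := by simp [embed]
@[simp] lemma embed_succ_zero {N : ℕ} (M : Matrix (Fin N) (Fin N) ℝ) (i : Fin N) :
    embed M i.succ 0 = 0 := by simp [embed]
@[simp] lemma embed_succ_succ {N : ℕ} (M : Matrix (Fin N) (Fin N) ℝ) (i j : Fin N) :
    embed M i.succ j.succ = M i j := by simp [embed]

lemma TNN.embed {N : ℕ} {M : Matrix (Fin N) (Fin N) ℝ} (hM : TNN M) : TNN (_root_.embed M) := by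
  intro r ρ γ hρ hγ
  match r with
  | 0 => simp [Matrix.det_isEmpty]
  | r + 1 =>
    by_cases hρ0 : ρ 0 = 0
    · by_cases hγ0 : γ 0 = 0
      · -- expand along first row
        rw [Matrix.det_succ_row_zero]
        rw [Finset.sum_eq_single (0 : Fin (r+1))]
        · have h00 : (_root_.embed M).submatrix ρ γ 0 0 = 1 := by
            simp [Matrix.submatrix_apply, hρ0, hγ0]
          rw [h00]
          simp only [Fin.val_zero, pow_zero, one_mul, Fin.succAbove_zero]
          have hρs : ∀ a : Fin r, ρ a.succ ≠ 0 := fun a => by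
            have : ρ 0 < ρ a.succ := hρ (Fin.succ_pos a)
            rw [hρ0] at this
            exact Fin.pos_iff_ne_zero.mp this
          have hγs : ∀ a : Fin r, γ a.succ ≠ 0 := fun a => by
            have : γ 0 < γ a.succ := hγ (Fin.succ_pos a)
            rw [hγ0] at this
            exact Fin.pos_iff_ne_zero.mp this
          have heq : ((_root_.embed M).submatrix ρ γ).submatrix Fin.succ Fin.succ
              = M.submatrix (fun a => (ρ a.succ).pred (hρs a)) (fun b => (γ b.succ).pred (hγs b)) := by
            ext a b
            simp only [Matrix.submatrix_apply]
            conv_lhs => rw [← Fin.succ_pred (ρ a.succ) (hρs a), ← Fin.succ_pred (γ b.succ) (hγs b)]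
            rw [embed_succ_succ]
          rw [heq]
          apply hM
          · intro a b hab
            have h1 : ρ a.succ < ρ b.succ := hρ (Fin.succ_lt_succ_iff.mpr hab)
            have h2 : (ρ a.succ : ℕ) ≠ 0 := fun h => hρs a (Fin.ext (by simpa using h))
            simp only [Fin.lt_iff_val_lt_val, Fin.coe_pred]
            have := Fin.lt_iff_val_lt_val.mp h1
            omega
          · intro a b hab
            have h1 : γ a.succ < γ b.succ := hγ (Fin.succ_lt_succ_iff.mpr hab)
            have h2 : (γ a.succ : ℕ) ≠ 0 := fun h => hγs a (Fin.ext (by simpa using h))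
            simp only [Fin.lt_iff_val_lt_val, Fin.coe_pred]
            have := Fin.lt_iff_val_lt_val.mp h1
            omega
        · intro j _ hj
          have hjne : γ j ≠ 0 := by
            intro h
            apply hj
            have := hγ.injective (h.trans hγ0.symm)
            exact this
          have : (_root_.embed M).submatrix ρ γ 0 j = 0 := by
            rw [Matrix.submatrix_apply, hρ0, ← Fin.succ_pred (γ j) hjne, embed_zero_succ]
          rw [this]
          ring
        · intro h
          exact absurd (Finset.mem_univ _) h
      · -- first row of submatrix is zero
        apply le_of_eq
        symm
        apply Matrix.det_eq_zero_of_row_eq_zero 0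
        intro b
        have hb : γ b ≠ 0 := by
          intro h
          rcases eq_or_lt_of_le (Fin.zero_le b) with hb0 | hb0
          · exact hγ0 (by rw [← hb0] at h; exact h)
          · have : γ 0 < γ b := hγ hb0
            rw [h] at this
            exact absurd this (by simp [Fin.lt_iff_val_lt_val])
        rw [Matrix.submatrix_apply, hρ0, ← Fin.succ_pred (γ b) hb, embed_zero_succ]
    · by_cases hγ0 : γ 0 = 0
      · apply le_of_eq
        symm
        apply Matrix.det_eq_zero_of_column_eq_zero 0
        intro a
        have ha : ρ a ≠ 0 := by
          intro h
          rcases eq_or_lt_of_le (Fin.zero_le a) with ha0 | ha0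
          · exact hρ0 (by rw [← ha0] at h; exact h)
          · have : ρ 0 < ρ a := hρ ha0
            rw [h] at this
            exact absurd this (by simp [Fin.lt_iff_val_lt_val])
        rw [Matrix.submatrix_apply, hγ0, ← Fin.succ_pred (ρ a) ha, embed_succ_zero]
      · -- no index is 0
        have hρs : ∀ a, ρ a ≠ 0 := fun a => by
          rcases eq_or_lt_of_le (Fin.zero_le a) with ha0 | ha0
          · rw [← ha0]; exact hρ0
          · intro h
            have : ρ 0 < ρ a := hρ ha0
            rw [h] at this
            exact absurd this (by simp [Fin.lt_iff_val_lt_val])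
        have hγs : ∀ b, γ b ≠ 0 := fun b => by
          rcases eq_or_lt_of_le (Fin.zero_le b) with hb0 | hb0
          · rw [← hb0]; exact hγ0
          · intro h
            have : γ 0 < γ b := hγ hb0
            rw [h] at this
            exact absurd this (by simp [Fin.lt_iff_val_lt_val])
        have heq : (_root_.embed M).submatrix ρ γ
            = M.submatrix (fun a => (ρ a).pred (hρs a)) (fun b => (γ b).pred (hγs b)) := by
          ext a b
          simp only [Matrix.submatrix_apply]
          conv_lhs => rw [← Fin.succ_pred (ρ a) (hρs a), ← Fin.succ_pred (γ b) (hγs b)]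
          rw [embed_succ_succ]
        rw [heq]
        apply hM
        · intro a b hab
          have h1 := Fin.lt_iff_val_lt_val.mp (hρ hab)
          have h2 : (ρ a : ℕ) ≠ 0 := fun h => hρs a (Fin.ext (by simpa using h))
          simp only [Fin.lt_iff_val_lt_val, Fin.coe_pred]
          omega
        · intro a b hab
          have h1 := Fin.lt_iff_val_lt_val.mp (hγ hab)
          have h2 : (γ a : ℕ) ≠ 0 := fun h => hγs a (Fin.ext (by simpa using h))
          simp only [Fin.lt_iff_val_lt_val, Fin.coe_pred]
          omega

end Embed

def st : ℕ → ℕ → ℕ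
  | 0, 0 => 1
  | 0, _+1 => 0
  | _+1, 0 => 0
  | m+1, k+1 => st m k + (k+1) * st m (k+1)

lemma st_eq_zero : ∀ {m k : ℕ}, m < k → st m k = 0
  | 0, 0, h => absurd h (lt_irrefl 0)
  | 0, _+1, _ => rfl
  | m+1, 0, h => absurd h (Nat.not_lt_zero _).elim -- unreachable
  | m+1, k+1, h => by
      have h1 : m < k := Nat.lt_of_succ_lt_succ h
      have h2 : m < k+1 := Nat.lt_of_lt_of_le h1 (Nat.le_succ k)
      simp [st, st_eq_zero h1, st_eq_zero h2]

noncomputable def Sm (n : ℕ) : Matrix (Fin (n+1)) (Fin (n+1)) ℝ :=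
  Matrix.of fun m k => (st (m : ℕ) (k : ℕ) : ℝ)

noncomputable def Dm (n : ℕ) : Matrix (Fin (n+2)) (Fin (n+2)) ℝ :=
  Matrix.of fun j k =>
    if (j : ℕ) = (k : ℕ) then 1 else if (j : ℕ) = (k : ℕ) + 1 then ((k : ℕ) : ℝ) else 0

lemma Sm_succ_factor (n : ℕ) : Sm (n+1) = embed (Sm n) * Dm n := by
  ext m k
  rw [Matrix.mul_apply]
  induction m using Fin.cases with
  | zero =>
    rw [Finset.sum_eq_single (0 : Fin (n+2))]
    · show (st 0 (k : ℕ) : ℝ) = embed (Sm n) 0 0 * Dm n 0 k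
      rw [embed_zero_zero, one_mul]
      show (st 0 (k : ℕ) : ℝ) = if (0 : ℕ) = (k : ℕ) then 1 else if (0:ℕ) = (k:ℕ)+1 then ((k:ℕ):ℝ) else 0
      rcases Nat.eq_zero_or_pos (k : ℕ) with hk | hk
      · rw [hk]; simp [st]
      · obtain ⟨k', hk'⟩ := Nat.exists_eq_succ_of_ne_zero (Nat.pos_iff_ne_zero.mp hk)
        rw [hk']
        simp [st]
    · intro j _ hj
      rw [← Fin.succ_pred j hj, embed_zero_succ, zero_mul]
    · intro h; exact absurd (Finset.mem_univ _) h
  | succ m' =>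
    rw [Fin.sum_univ_succ]
    rw [embed_succ_zero, zero_mul, zero_add]
    have hterm : ∀ j' : Fin (n+1),
        embed (Sm n) m'.succ j'.succ * Dm n j'.succ k = (st (m' : ℕ) (j' : ℕ) : ℝ) * Dm n j'.succ k := by
      intro j'
      rw [embed_succ_succ]; rfl
    simp only [hterm]
    induction k using Fin.cases with
    | zero =>
      have : ∀ j' : Fin (n+1), (st (m' : ℕ) (j' : ℕ) : ℝ) * Dm n j'.succ 0 = 0 := by
        intro j'
        have : Dm n j'.succ 0 = 0 := by
          show (if ((j':ℕ)+1 : ℕ) = (0:ℕ) then (1:ℝ) else if ((j':ℕ)+1 : ℕ) = 0+1 then ((0:ℕ):ℝ) else 0) = 0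
          by_cases h : (j' : ℕ) + 1 = 0 + 1 <;> simp [h]
        rw [this, mul_zero]
      rw [Finset.sum_congr rfl (fun j' _ => this j'), Finset.sum_const_zero]
      show (st ((m' : ℕ) + 1) (0 : ℕ) : ℝ) = 0
      norm_num [st]
    | succ k' =>
      have hpt : ∀ j' : Fin (n+1), (st (m' : ℕ) (j' : ℕ) : ℝ) * Dm n j'.succ k'.succ
          = (if j' = k' then (st (m' : ℕ) (k' : ℕ) : ℝ) else 0)
            + (if (j' : ℕ) = (k' : ℕ) + 1 then ((((k' : ℕ) + 1) : ℕ) : ℝ) * (st (m' : ℕ) ((k' : ℕ) + 1) : ℝ) else 0) := by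
        intro j'
        have hD : Dm n j'.succ k'.succ
            = if ((j':ℕ)+1) = ((k':ℕ)+1) then (1:ℝ) else if ((j':ℕ)+1) = ((k':ℕ)+1)+1 then (((k':ℕ)+1 : ℕ) : ℝ) else 0 := rfl
        rw [hD]
        by_cases h1 : (j' : ℕ) = (k' : ℕ)
        · have hne : ¬ ((j':ℕ) = (k':ℕ) + 1) := by omega
          have hj : j' = k' := Fin.ext h1
          simp [h1, hj, hne]
        · by_cases h2 : (j' : ℕ) = (k' : ℕ) + 1
          · have hj : j' ≠ k' := fun h => h1 (by rw [h])
            have : (st (m' : ℕ) (j' : ℕ) : ℝ) = (st (m' : ℕ) ((k' : ℕ)+1) : ℝ) := by rw [h2]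
            simp only [if_neg hj, if_pos h2, this]
            have hne1 : ¬ ((j':ℕ)+1 = (k':ℕ)+1) := by omega
            simp [hne1, h2]
            ring
          · have hj : j' ≠ k' := fun h => h1 (by rw [h])
            have hne1 : ¬ ((j':ℕ)+1 = (k':ℕ)+1) := by omega
            have hne2 : ¬ ((j':ℕ)+1 = (k':ℕ)+1+1) := by omega
            simp [hj, h1, h2, hne1, hne2]
      rw [Finset.sum_congr rfl (fun j' _ => hpt j'), Finset.sum_add_distrib]
      rw [Finset.sum_ite_eq' univ k' (fun _ => (st (m' : ℕ) (k' : ℕ) : ℝ))]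
      simp only [Finset.mem_univ, if_pos]
      have hsecond : (∑ j' : Fin (n+1), if (j' : ℕ) = (k' : ℕ) + 1
          then ((((k' : ℕ) + 1) : ℕ) : ℝ) * (st (m' : ℕ) ((k' : ℕ) + 1) : ℝ) else 0)
          = (((k' : ℕ) + 1 : ℕ) : ℝ) * (st (m' : ℕ) ((k' : ℕ) + 1) : ℝ) := by
        by_cases hk : (k' : ℕ) < n
        · have hmem : (⟨(k':ℕ)+1, by omega⟩ : Fin (n+1)) ∈ (univ : Finset (Fin (n+1))) := Finset.mem_univ _
          rw [Finset.sum_eq_single (⟨(k':ℕ)+1, by omega⟩ : Fin (n+1))]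
          · simp
          · intro j' _ hj'
            have : ¬ ((j':ℕ) = (k':ℕ)+1) := fun h => hj' (Fin.ext h)
            simp [this]
          · intro h; exact absurd hmem h
        · have hkn : (k' : ℕ) = n := by omega
          have hz : st (m' : ℕ) ((k' : ℕ)+1) = 0 := st_eq_zero (by omega)
          rw [hz]
          simp only [Nat.cast_zero, mul_zero]
          apply Finset.sum_eq_zero
          intro j' _
          have : ¬ ((j':ℕ) = (k':ℕ)+1) := by omega
          simp [this]
      rw [hsecond]
      show (st ((m':ℕ)+1) ((k':ℕ)+1) : ℝ) = _
      rw [show st ((m':ℕ)+1) ((k':ℕ)+1) = st (m':ℕ) (k':ℕ) + ((k':ℕ)+1) * st (m':ℕ) ((k':ℕ)+1) from rfl]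
      push_cast
      ring


lemma TNN_Dm (n : ℕ) : TNN (Dm n) := by
  apply TNN_bidiag
  · intro i j
    show (0:ℝ) ≤ if (i : ℕ) = (j : ℕ) then 1 else if (i : ℕ) = (j : ℕ) + 1 then ((j:ℕ):ℝ) else 0
    by_cases h1 : (i : ℕ) = (j : ℕ)
    · simp [h1]
    · by_cases h2 : (i : ℕ) = (j : ℕ) + 1
      · simp only [h1, h2, if_false, if_true]
        positivity
      · simp [h1, h2]
  · intro i j hne
    by_cases h1 : (i : ℕ) = (j : ℕ)
    · omega
    · by_cases h2 : (i : ℕ) = (j : ℕ) + 1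
      · omega
      · exfalso
        apply hne
        show (if (i : ℕ) = (j : ℕ) then (1:ℝ) else if (i : ℕ) = (j : ℕ) + 1 then ((j:ℕ):ℝ) else 0) = 0
        simp [h1, h2]

lemma TNN_Sm : ∀ n, TNN (Sm n)
  | 0 => by
      apply TNN_bidiag
      · intro i j
        exact Nat.cast_nonneg _
      · intro i j _
        omega
  | n+1 => by
      rw [Sm_succ_factor]
      exact TNN.mul (TNN.embed (TNN_Sm n)) (TNN_Dm n)

-- explicit finset-of-finsets model of partitions
def isPart {m : ℕ} (Q : Finset (Finset (Fin m))) : Prop :=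
  (∀ p ∈ Q, ∀ q ∈ Q, p ≠ q → Disjoint p q) ∧ Q.sup id = Finset.univ ∧ (∅ : Finset (Fin m)) ∉ Q

instance {m : ℕ} : DecidablePred (@isPart m) := fun Q => by
  unfold isPart
  infer_instance

def PF (m k : ℕ) : Finset (Finset (Finset (Fin m))) :=
  univ.filter (fun Q => isPart Q ∧ Q.card = k)


lemma stirling2_eq_card (m k : ℕ) : stirling2 m k = (PF m k).card := by
  have e : {P : Finpartition (Finset.univ : Finset (Fin m)) // P.parts.card = k}
      ≃ {Q // Q ∈ PF m k} := by
    refine ⟨fun P => ⟨P.1.parts, ?_⟩,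
      fun Q =>
        have hQ : isPart Q.1 ∧ Q.1.card = k := by
          have h := Q.2
          simp only [PF, Finset.mem_filter, Finset.mem_univ, true_and] at h
          exact h
        ⟨⟨Q.1,
          Finset.supIndep_iff_pairwiseDisjoint.mpr (fun p hp q hq hpq => hQ.1.1 p hp q hq hpq),
          hQ.1.2.1, by simpa using hQ.1.2.2⟩, hQ.2⟩, ?_, ?_⟩
    · simp only [PF, Finset.mem_filter, Finset.mem_univ, true_and]
      refine ⟨⟨?_, P.1.sup_parts, ?_⟩, P.2⟩
      · intro p hp q hq hpq
        exact (Finset.supIndep_iff_pairwiseDisjoint.mp P.1.supIndep) hp hq hpq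
      · simpa using P.1.not_bot_mem
    · intro P
      exact Subtype.ext (Finpartition.ext rfl)
    · intro Q
      rfl
  rw [stirling2, Nat.card_congr e, Nat.card_eq_fintype_card, Fintype.card_coe]

lemma PF_zero_zero : (PF 0 0).card = 1 := by
  have : PF 0 0 = {∅} := by
    ext Q
    simp only [PF, Finset.mem_filter, Finset.mem_univ, true_and, Finset.mem_singleton]
    constructor
    · rintro ⟨-, hc⟩
      exact Finset.card_eq_zero.mp hc
    · rintro rfl
      refine ⟨⟨?_, ?_, ?_⟩, rfl⟩
      · intro p hp; simp at hp
      · simp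
      · simp
  rw [this, Finset.card_singleton]

lemma PF_zero_succ (k : ℕ) : (PF 0 (k+1)).card = 0 := by
  rw [Finset.card_eq_zero]
  ext Q
  simp only [PF, Finset.mem_filter, Finset.mem_univ, true_and, Finset.notMem_empty,
    iff_false, not_and]
  intro hQ
  have : Q = ∅ := by
    rw [Finset.eq_empty_iff_forall_notMem]
    intro p hp
    have hpe : p = ∅ := Finset.eq_empty_of_isEmpty p
    exact hQ.2.2 (hpe ▸ hp)
  rw [this]
  simp

lemma PF_succ_zero (m : ℕ) : (PF (m+1) 0).card = 0 := by
  rw [Finset.card_eq_zero]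
  ext Q
  simp only [PF, Finset.mem_filter, Finset.mem_univ, true_and, Finset.notMem_empty,
    iff_false, not_and]
  intro hQ hc
  have hQe : Q = ∅ := Finset.card_eq_zero.mp hc
  have := hQ.2.1
  rw [hQe] at this
  simp only [Finset.sup_empty] at this
  have h0 : (0 : Fin (m+1)) ∈ (Finset.univ : Finset (Fin (m+1))) := Finset.mem_univ _
  rw [← this] at h0
  simp at h0

section UpDown

variable {m : ℕ}

def up (q : Finset (Fin m)) : Finset (Fin (m+1)) := q.map (Fin.succEmb m)

noncomputable def down (p : Finset (Fin (m+1))) : Finset (Fin m) :=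
  p.preimage Fin.succ (Fin.succ_injective m).injOn

@[simp] lemma mem_up {q : Finset (Fin m)} {x : Fin (m+1)} :
    x ∈ up q ↔ ∃ y ∈ q, Fin.succ y = x := by simp [up]

@[simp] lemma mem_down {p : Finset (Fin (m+1))} {y : Fin m} :
    y ∈ down p ↔ Fin.succ y ∈ p := by simp [down]

lemma zero_not_mem_up (q : Finset (Fin m)) : (0 : Fin (m+1)) ∉ up q := by
  simp only [mem_up, not_exists]
  intro y hy
  exact Fin.succ_ne_zero y hy.2

lemma down_up (q : Finset (Fin m)) : down (up q) = q := by
  ext y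
  simp [Fin.succ_injective m |>.eq_iff]

lemma up_down {p : Finset (Fin (m+1))} (h0 : (0 : Fin (m+1)) ∉ p) : up (down p) = p := by
  ext x
  simp only [mem_up, mem_down]
  constructor
  · rintro ⟨y, hy, rfl⟩
    exact hy
  · intro hx
    have hxne : x ≠ 0 := fun h => h0 (h ▸ hx)
    exact ⟨x.pred hxne, by rwa [Fin.succ_pred], Fin.succ_pred x hxne⟩

lemma up_injective : Function.Injective (@up m) := fun q q' h => by
  rw [← down_up q, ← down_up q', h]

lemma up_nonempty {q : Finset (Fin m)} (h : q ≠ ∅) : up q ≠ ∅ := by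
  intro h2
  apply h
  rw [← down_up q, h2]
  ext y
  simp

lemma down_nonempty {p : Finset (Fin (m+1))} (h0 : (0 : Fin (m+1)) ∉ p) (h : p ≠ ∅) :
    down p ≠ ∅ := by
  intro h2
  apply h
  rw [← up_down h0, h2]
  ext x
  simp

end UpDown

-- unique part containing an element
lemma part_existsUnique {m : ℕ} {Q : Finset (Finset (Fin m))} (hQ : isPart Q) (x : Fin m) :
    ∃! p, p ∈ Q ∧ x ∈ p := by
  have hx : x ∈ Q.sup id := hQ.2.1 ▸ Finset.mem_univ x
  rw [Finset.mem_sup] at hx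
  obtain ⟨p, hp, hxp⟩ := hx
  refine ⟨p, ⟨hp, hxp⟩, ?_⟩
  rintro q ⟨hq, hxq⟩
  by_contra hne
  exact Finset.disjoint_left.mp (hQ.1 q hq p hp hne) hxq hxp

section Rec

variable {m k : ℕ}

lemma not_zero_mem_of_ne {Q : Finset (Finset (Fin (m+1)))} (hQ : isPart Q)
    (hs : ({0} : Finset (Fin (m+1))) ∈ Q) {p : Finset (Fin (m+1))} (hp : p ∈ Q)
    (hne : p ≠ {0}) : (0 : Fin (m+1)) ∉ p := by
  intro h0
  obtain ⟨t, -, huniq⟩ := part_existsUnique hQ (0 : Fin (m+1))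
  have h1 := huniq p ⟨hp, h0⟩
  have h2 := huniq {0} ⟨hs, Finset.mem_singleton_self 0⟩
  exact hne (h1.trans h2.symm)

lemma claim1 : ((PF (m+1) (k+1)).filter (fun Q => ({0} : Finset (Fin (m+1))) ∈ Q)).card
    = (PF m k).card := by
  refine Finset.card_bij' (fun Q _ => (Q.erase {0}).image down)
    (fun R _ => insert {0} (R.image up)) ?_ ?_ ?_ ?_
  · -- maps into PF m k
    intro Q hQm
    simp only [Finset.mem_filter] at hQm
    obtain ⟨hQPF, hs⟩ := hQm
    simp only [PF, Finset.mem_filter, Finset.mem_univ, true_and] at hQPF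
    obtain ⟨hQ, hcard⟩ := hQPF
    have hnz : ∀ p ∈ Q.erase {0}, (0 : Fin (m+1)) ∉ p := by
      intro p hp
      rw [Finset.mem_erase] at hp
      exact not_zero_mem_of_ne hQ hs hp.2 hp.1
    have hinj : Set.InjOn down (Q.erase {0} : Set (Finset (Fin (m+1)))) := by
      intro p hp q hq h
      rw [← up_down (hnz p hp), ← up_down (hnz q hq), h]
    simp only [PF, Finset.mem_filter, Finset.mem_univ, true_and]
    refine ⟨⟨?_, ?_, ?_⟩, ?_⟩
    · -- disjoint
      intro p' hp' q' hq' hne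
      rw [Finset.mem_image] at hp' hq'
      obtain ⟨p, hp, rfl⟩ := hp'
      obtain ⟨q, hq, rfl⟩ := hq'
      have hpq : p ≠ q := fun h => hne (by rw [h])
      have hd := hQ.1 p (Finset.mem_of_mem_erase hp) q (Finset.mem_of_mem_erase hq) hpq
      rw [Finset.disjoint_left] at hd ⊢
      intro y hy hy2
      rw [mem_down] at hy hy2
      exact hd hy hy2
    · -- sup = univ
      rw [Finset.eq_univ_iff_forall]
      intro y
      rw [Finset.mem_sup]
      have hy : Fin.succ y ∈ Q.sup id := hQ.2.1 ▸ Finset.mem_univ _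
      rw [Finset.mem_sup] at hy
      obtain ⟨p, hp, hyp⟩ := hy
      have hpne : p ≠ {0} := by
        intro h
        rw [h] at hyp
        simp only [id_eq, Finset.mem_singleton] at hyp
        exact Fin.succ_ne_zero y hyp
      exact ⟨down p, Finset.mem_image_of_mem down (Finset.mem_erase.mpr ⟨hpne, hp⟩),
        mem_down.mpr hyp⟩
    · -- no empty part
      intro h
      rw [Finset.mem_image] at h
      obtain ⟨p, hp, hpe⟩ := h
      have h1 : p ≠ ∅ := fun h => hQ.2.2 (h ▸ Finset.mem_of_mem_erase hp)
      exact down_nonempty (hnz p hp) h1 hpe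
    · rw [Finset.card_image_of_injOn hinj, Finset.card_erase_of_mem hs, hcard]
      omega
  · -- inverse maps into filter
    intro R hR
    simp only [PF, Finset.mem_filter, Finset.mem_univ, true_and] at hR
    obtain ⟨hR, hcard⟩ := hR
    have hup0 : ({0} : Finset (Fin (m+1))) ∉ R.image up := by
      intro h
      rw [Finset.mem_image] at h
      obtain ⟨q, hq, hq0⟩ := h
      have : (0 : Fin (m+1)) ∈ up q := hq0 ▸ Finset.mem_singleton_self 0
      exact zero_not_mem_up q this
    simp only [Finset.mem_filter, PF, Finset.mem_univ, true_and]
    refine ⟨⟨⟨?_, ?_, ?_⟩, ?_⟩, Finset.mem_insert_self _ _⟩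
    · -- disjoint
      intro p' hp' q' hq' hne
      rw [Finset.mem_insert] at hp' hq'
      rcases hp' with rfl | hp'
      · rcases hq' with rfl | hq'
        · exact absurd rfl hne
        · rw [Finset.mem_image] at hq'
          obtain ⟨q, hq, rfl⟩ := hq'
          rw [Finset.disjoint_left]
          intro x hx
          rw [Finset.mem_singleton] at hx
          subst hx
          exact zero_not_mem_up q
      · rcases hq' with rfl | hq'
        · rw [Finset.mem_image] at hp'
          obtain ⟨p, hp, rfl⟩ := hp'
          rw [Finset.disjoint_right]
          intro x hx
          rw [Finset.mem_singleton] at hx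
          subst hx
          exact zero_not_mem_up p
        · rw [Finset.mem_image] at hp' hq'
          obtain ⟨p, hp, rfl⟩ := hp'
          obtain ⟨q, hq, rfl⟩ := hq'
          have hpq : p ≠ q := fun h => hne (by rw [h])
          have hd := hR.1 p hp q hq hpq
          rw [Finset.disjoint_left] at hd ⊢
          intro x hx hx2
          rw [mem_up] at hx hx2
          obtain ⟨y, hy, rfl⟩ := hx
          obtain ⟨y', hy', he⟩ := hx2
          have : y' = y := Fin.succ_injective m he
          subst this
          exact hd hy hy'
    · -- sup
      rw [Finset.eq_univ_iff_forall]
      intro x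
      rw [Finset.mem_sup]
      by_cases hx : x = 0
      · exact ⟨{0}, Finset.mem_insert_self _ _, by simp [hx]⟩
      · have hy : x.pred hx ∈ R.sup id := hR.2.1 ▸ Finset.mem_univ _
        rw [Finset.mem_sup] at hy
        obtain ⟨q, hq, hyq⟩ := hy
        refine ⟨up q, Finset.mem_insert_of_mem (Finset.mem_image_of_mem up hq), ?_⟩
        simp only [id_eq, mem_up]
        simp only [id_eq] at hyq
        exact ⟨x.pred hx, hyq, Fin.succ_pred x hx⟩
    · -- no empty
      intro h
      rw [Finset.mem_insert] at h
      rcases h with h | h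
      · exact absurd h.symm (Finset.singleton_ne_empty 0)
      · rw [Finset.mem_image] at h
        obtain ⟨q, hq, hqe⟩ := h
        exact up_nonempty (fun h => hR.2.2 (h ▸ hq)) hqe
    · rw [Finset.card_insert_of_notMem hup0,
        Finset.card_image_of_injective _ up_injective, hcard]
  · -- left inverse
    intro Q hQm
    simp only [Finset.mem_filter] at hQm
    obtain ⟨hQPF, hs⟩ := hQm
    simp only [PF, Finset.mem_filter, Finset.mem_univ, true_and] at hQPF
    obtain ⟨hQ, -⟩ := hQPF
    have hnz : ∀ p ∈ Q.erase {0}, (0 : Fin (m+1)) ∉ p := by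
      intro p hp
      rw [Finset.mem_erase] at hp
      exact not_zero_mem_of_ne hQ hs hp.2 hp.1
    rw [Finset.image_image]
    have : (Q.erase {0}).image (up ∘ down) = Q.erase {0} :=
      (Finset.image_congr (fun p hp => up_down (hnz p hp))).trans Finset.image_id
    rw [this, Finset.insert_erase hs]
  · -- right inverse
    intro R hR
    have hup0 : ({0} : Finset (Fin (m+1))) ∉ R.image up := by
      intro h
      rw [Finset.mem_image] at h
      obtain ⟨q, hq, hq0⟩ := h
      have : (0 : Fin (m+1)) ∈ up q := hq0 ▸ Finset.mem_singleton_self 0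
      exact zero_not_mem_up q this
    rw [Finset.erase_insert hup0, Finset.image_image]
    exact (Finset.image_congr (fun q _ => down_up q)).trans Finset.image_id

end Rec
section Rec2

variable {m k : ℕ}

noncomputable def part0 (Q : Finset (Finset (Fin (m+1)))) (hQ : isPart Q) :
    Finset (Fin (m+1)) :=
  Q.choose (fun p => (0 : Fin (m+1)) ∈ p) (part_existsUnique hQ 0)

lemma part0_mem {Q : Finset (Finset (Fin (m+1)))} (hQ : isPart Q) : part0 Q hQ ∈ Q :=
  Finset.choose_mem _ _ _

lemma part0_zero_mem {Q : Finset (Finset (Fin (m+1)))} (hQ : isPart Q) :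
    (0 : Fin (m+1)) ∈ part0 Q hQ :=
  Finset.choose_property (fun p => (0 : Fin (m+1)) ∈ p) Q (part_existsUnique hQ 0)

lemma part0_eq {Q : Finset (Finset (Fin (m+1)))} (hQ : isPart Q) {b : Finset (Fin (m+1))}
    (hb : b ∈ Q) (h0 : (0 : Fin (m+1)) ∈ b) : part0 Q hQ = b :=
  (part_existsUnique hQ 0).unique ⟨part0_mem hQ, part0_zero_mem hQ⟩ ⟨hb, h0⟩

lemma zero_not_mem_of_ne_part0 {Q : Finset (Finset (Fin (m+1)))} (hQ : isPart Q)
    {p : Finset (Fin (m+1))} (hp : p ∈ Q) (hne : p ≠ part0 Q hQ) : (0 : Fin (m+1)) ∉ p :=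
  fun h => hne (part0_eq hQ hp h).symm

noncomputable def dz (p : Finset (Fin (m+1))) : Finset (Fin m) := down (p.erase 0)

lemma up_dz (p : Finset (Fin (m+1))) : up (dz p) = p.erase 0 :=
  up_down (Finset.notMem_erase _ _)

lemma dz_up (q : Finset (Fin m)) : dz (up q) = q := by
  rw [dz, Finset.erase_eq_of_notMem (zero_not_mem_up q), down_up]

lemma erase0_ne_empty {Q : Finset (Finset (Fin (m+1)))} (hQ : isPart Q)
    (hns : ({0} : Finset (Fin (m+1))) ∉ Q) {p : Finset (Fin (m+1))} (hp : p ∈ Q) :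
    p.erase (0 : Fin (m+1)) ≠ ∅ := by
  intro h
  rcases (Finset.erase_eq_empty_iff _ _).mp h with h | h
  · exact hQ.2.2 (h ▸ hp)
  · exact hns (h ▸ hp)

lemma dz_ne_empty {Q : Finset (Finset (Fin (m+1)))} (hQ : isPart Q)
    (hns : ({0} : Finset (Fin (m+1))) ∉ Q) {p : Finset (Fin (m+1))} (hp : p ∈ Q) :
    dz p ≠ ∅ :=
  down_nonempty (Finset.notMem_erase _ _) (erase0_ne_empty hQ hns hp)

lemma dz_injOn {Q : Finset (Finset (Fin (m+1)))} (hQ : isPart Q)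
    (hns : ({0} : Finset (Fin (m+1))) ∉ Q) :
    Set.InjOn dz (Q : Set (Finset (Fin (m+1)))) := by
  intro p hp q hq h
  by_contra hne
  have he : p.erase 0 = q.erase 0 := by
    rw [← up_dz p, ← up_dz q, h]
  obtain ⟨y, hy⟩ := Finset.nonempty_iff_ne_empty.mpr (erase0_ne_empty hQ hns hp)
  have hyq : y ∈ q.erase 0 := he ▸ hy
  exact Finset.disjoint_left.mp (hQ.1 p hp q hq hne)
    (Finset.mem_of_mem_erase hy) (Finset.mem_of_mem_erase hyq)

lemma i2_mem {Q : Finset (Finset (Fin (m+1)))} (hQ : isPart Q)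
    (hns : ({0} : Finset (Fin (m+1))) ∉ Q) (hcard : Q.card = k + 1) :
    Q.image dz ∈ PF m (k+1) := by
  simp only [PF, Finset.mem_filter, Finset.mem_univ, true_and]
  refine ⟨⟨?_, ?_, ?_⟩, ?_⟩
  · intro p' hp' q' hq' hne
    rw [Finset.mem_image] at hp' hq'
    obtain ⟨p, hp, rfl⟩ := hp'
    obtain ⟨q, hq, rfl⟩ := hq'
    have hpq : p ≠ q := fun h => hne (by rw [h])
    have hd := hQ.1 p hp q hq hpq
    rw [Finset.disjoint_left] at hd ⊢
    intro y hy hy2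
    rw [dz, mem_down] at hy hy2
    exact hd (Finset.mem_of_mem_erase hy) (Finset.mem_of_mem_erase hy2)
  · rw [Finset.eq_univ_iff_forall]
    intro y
    rw [Finset.mem_sup]
    have hy : Fin.succ y ∈ Q.sup id := hQ.2.1 ▸ Finset.mem_univ _
    rw [Finset.mem_sup] at hy
    obtain ⟨p, hp, hyp⟩ := hy
    refine ⟨dz p, Finset.mem_image_of_mem dz hp, ?_⟩
    simp only [id_eq] at hyp ⊢
    rw [dz, mem_down]
    exact Finset.mem_erase.mpr ⟨Fin.succ_ne_zero y, hyp⟩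
  · intro h
    rw [Finset.mem_image] at h
    obtain ⟨p, hp, hpe⟩ := h
    exact dz_ne_empty hQ hns hp hpe
  · rw [Finset.card_image_of_injOn (dz_injOn hQ hns), hcard]

lemma j2_mem {R : Finset (Finset (Fin m))} {p : Finset (Fin m)} (hR : isPart R)
    (hcard : R.card = k + 1) (hp : p ∈ R) :
    insert (insert (0 : Fin (m+1)) (up p)) ((R.erase p).image up)
      ∈ (PF (m+1) (k+1)).filter (fun Q => ({0} : Finset (Fin (m+1))) ∉ Q) := by
  have hpne : p ≠ ∅ := fun h => hR.2.2 (h ▸ hp)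
  have hbig0 : ∀ q ∈ R.erase p, insert (0 : Fin (m+1)) (up p) ≠ up q := by
    intro q _ h
    exact zero_not_mem_up q (h ▸ Finset.mem_insert_self 0 (up p))
  have hbignotmem : insert (0 : Fin (m+1)) (up p) ∉ (R.erase p).image up := by
    intro h
    rw [Finset.mem_image] at h
    obtain ⟨q, hq, hqe⟩ := h
    exact hbig0 q hq hqe.symm
  simp only [Finset.mem_filter, PF, Finset.mem_univ, true_and]
  refine ⟨⟨⟨?_, ?_, ?_⟩, ?_⟩, ?_⟩
  · -- pairwise disjoint
    intro p' hp' q' hq' hne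
    rw [Finset.mem_insert] at hp' hq'
    rcases hp' with rfl | hp'
    · rcases hq' with rfl | hq'
      · exact absurd rfl hne
      · rw [Finset.mem_image] at hq'
        obtain ⟨q, hq, rfl⟩ := hq'
        rw [Finset.disjoint_left]
        intro x hx hx2
        rw [Finset.mem_insert] at hx
        rcases hx with rfl | hx
        · exact zero_not_mem_up q hx2
        · rw [mem_up] at hx hx2
          obtain ⟨y, hy, rfl⟩ := hx
          obtain ⟨y', hy', he⟩ := hx2
          have : y' = y := Fin.succ_injective m he
          subst this
          have hqp : q ≠ p := fun h =>
            (Finset.mem_erase.mp hq).1 h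
          exact Finset.disjoint_left.mp
            (hR.1 q (Finset.mem_of_mem_erase hq) p hp hqp) hy' hy
    · rcases hq' with rfl | hq'
      · rw [Finset.mem_image] at hp'
        obtain ⟨q, hq, rfl⟩ := hp'
        rw [Finset.disjoint_right]
        intro x hx hx2
        rw [Finset.mem_insert] at hx
        rcases hx with rfl | hx
        · exact zero_not_mem_up q hx2
        · rw [mem_up] at hx hx2
          obtain ⟨y, hy, rfl⟩ := hx
          obtain ⟨y', hy', he⟩ := hx2
          have : y' = y := Fin.succ_injective m he
          subst this
          have hqp : q ≠ p := fun h => (Finset.mem_erase.mp hq).1 h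
          exact Finset.disjoint_left.mp
            (hR.1 q (Finset.mem_of_mem_erase hq) p hp hqp) hy' hy
      · rw [Finset.mem_image] at hp' hq'
        obtain ⟨q1, hq1, rfl⟩ := hp'
        obtain ⟨q2, hq2, rfl⟩ := hq'
        have hq12 : q1 ≠ q2 := fun h => hne (by rw [h])
        have hd := hR.1 q1 (Finset.mem_of_mem_erase hq1) q2 (Finset.mem_of_mem_erase hq2) hq12
        rw [Finset.disjoint_left] at hd ⊢
        intro x hx hx2
        rw [mem_up] at hx hx2
        obtain ⟨y, hy, rfl⟩ := hx
        obtain ⟨y', hy', he⟩ := hx2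
        have : y' = y := Fin.succ_injective m he
        subst this
        exact hd hy hy'
  · -- sup = univ
    rw [Finset.eq_univ_iff_forall]
    intro x
    rw [Finset.mem_sup]
    by_cases hx : x = 0
    · exact ⟨insert 0 (up p), Finset.mem_insert_self _ _, by simp [hx]⟩
    · have hy : x.pred hx ∈ R.sup id := hR.2.1 ▸ Finset.mem_univ _
      rw [Finset.mem_sup] at hy
      obtain ⟨q, hq, hyq⟩ := hy
      simp only [id_eq] at hyq
      by_cases hqp : q = p
      · subst hqp
        refine ⟨insert 0 (up q), Finset.mem_insert_self _ _, ?_⟩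
        simp only [id_eq, Finset.mem_insert]
        right
        rw [mem_up]
        exact ⟨x.pred hx, hyq, Fin.succ_pred x hx⟩
      · refine ⟨up q, Finset.mem_insert_of_mem
          (Finset.mem_image_of_mem up (Finset.mem_erase.mpr ⟨hqp, hq⟩)), ?_⟩
        simp only [id_eq]
        rw [mem_up]
        exact ⟨x.pred hx, hyq, Fin.succ_pred x hx⟩
  · -- ∅ not a part
    intro h
    rw [Finset.mem_insert] at h
    rcases h with h | h
    · exact (Finset.insert_ne_empty _ _) h.symm
    · rw [Finset.mem_image] at h
      obtain ⟨q, hq, hqe⟩ := h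
      exact up_nonempty (fun h2 => hR.2.2 (h2 ▸ Finset.mem_of_mem_erase hq)) hqe
  · -- card
    rw [Finset.card_insert_of_notMem hbignotmem,
      Finset.card_image_of_injective _ up_injective,
      Finset.card_erase_of_mem hp, hcard]
    omega
  · -- {0} not a part
    intro h
    rw [Finset.mem_insert] at h
    rcases h with h | h
    · obtain ⟨y, hy⟩ := Finset.nonempty_iff_ne_empty.mpr hpne
      have : Fin.succ y ∈ ({0} : Finset (Fin (m+1))) := by
        rw [h]
        exact Finset.mem_insert_of_mem (mem_up.mpr ⟨y, hy, rfl⟩)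
      rw [Finset.mem_singleton] at this
      exact Fin.succ_ne_zero y this
    · rw [Finset.mem_image] at h
      obtain ⟨q, hq, hqe⟩ := h
      have : (0 : Fin (m+1)) ∈ up q := hqe ▸ Finset.mem_singleton_self 0
      exact zero_not_mem_up q this

lemma claim2 : ((PF (m+1) (k+1)).filter
      (fun Q => ({0} : Finset (Fin (m+1))) ∉ Q)).card
    = ((PF m (k+1)).sigma (fun R => R)).card := by
  refine Finset.card_bij'
    (fun Q hQm =>
      have hQ : isPart Q := by
        simp only [Finset.mem_filter, PF, Finset.mem_univ, true_and] at hQm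
        exact hQm.1.1
      ⟨Q.image dz, dz (part0 Q hQ)⟩)
    (fun x _ => insert (insert (0 : Fin (m+1)) (up x.2)) ((x.1.erase x.2).image up))
    ?_ ?_ ?_ ?_
  · -- i maps into sigma
    intro Q hQm
    have hQm' := hQm
    simp only [Finset.mem_filter, PF, Finset.mem_univ, true_and] at hQm'
    obtain ⟨⟨hQ, hcard⟩, hns⟩ := hQm'
    rw [Finset.mem_sigma]
    constructor
    · exact i2_mem hQ hns hcard
    · exact Finset.mem_image_of_mem dz (part0_mem _)
  · -- j maps into filter
    intro x hx
    rw [Finset.mem_sigma] at hx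
    obtain ⟨hR, hp⟩ := hx
    simp only [PF, Finset.mem_filter, Finset.mem_univ, true_and] at hR
    exact j2_mem hR.1 hR.2 hp
  · -- left inverse : j (i Q) = Q
    intro Q hQm
    have hQm' := hQm
    simp only [Finset.mem_filter, PF, Finset.mem_univ, true_and] at hQm'
    obtain ⟨⟨hQ, hcard⟩, hns⟩ := hQm'
    dsimp only
    set t := part0 Q hQ with htdef
    have ht : t ∈ Q := part0_mem hQ
    have h0t : (0 : Fin (m+1)) ∈ t := part0_zero_mem hQ
    have h1 : up (dz t) = t.erase 0 := up_dz t
    have h2 : insert (0 : Fin (m+1)) (t.erase 0) = t := Finset.insert_erase h0t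
    have h3 : (Q.image dz).erase (dz t) = (Q.erase t).image dz := by
      ext x
      simp only [Finset.mem_erase, Finset.mem_image]
      constructor
      · rintro ⟨hxne, q, hq, rfl⟩
        exact ⟨q, ⟨fun h => hxne (by rw [h]), hq⟩, rfl⟩
      · rintro ⟨q, ⟨hqt, hq⟩, rfl⟩
        exact ⟨fun h => hqt (dz_injOn hQ hns hq ht h), q, hq, rfl⟩
    rw [h1, h2, h3, Finset.image_image]
    have h4 : (Q.erase t).image (up ∘ dz) = Q.erase t := by
      refine (Finset.image_congr ?_).trans Finset.image_id
      intro q hq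
      rw [Finset.mem_coe, Finset.mem_erase] at hq
      show up (dz q) = q
      rw [up_dz, Finset.erase_eq_of_notMem (zero_not_mem_of_ne_part0 hQ hq.2 hq.1)]
    rw [h4, Finset.insert_erase ht]
  · -- right inverse : i (j x) = x
    intro x hx
    rw [Finset.mem_sigma] at hx
    obtain ⟨hRm, hp⟩ := hx
    have hRm' := hRm
    simp only [PF, Finset.mem_filter, Finset.mem_univ, true_and] at hRm'
    obtain ⟨hR, hcard⟩ := hRm'
    obtain ⟨R, p⟩ := x
    dsimp only at hp ⊢
    have hQmem := j2_mem hR hcard hp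
    have hQ : isPart (insert (insert (0 : Fin (m+1)) (up p)) ((R.erase p).image up)) := by
      simp only [Finset.mem_filter, PF, Finset.mem_univ, true_and] at hQmem
      exact hQmem.1.1
    have hbig : part0 _ hQ = insert (0 : Fin (m+1)) (up p) :=
      part0_eq hQ (Finset.mem_insert_self _ _) (Finset.mem_insert_self _ _)
    have hdzbig : dz (insert (0 : Fin (m+1)) (up p)) = p := by
      rw [dz, Finset.erase_insert (zero_not_mem_up p), down_up]
    congr 1
    · rw [Finset.image_insert, hdzbig, Finset.image_image]
      have : (R.erase p).image (dz ∘ up) = R.erase p := by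
        refine (Finset.image_congr ?_).trans Finset.image_id
        intro q _
        exact dz_up q
      rw [this, Finset.insert_erase hp]
    · rw [hbig, hdzbig]

end Rec2

section Final

variable {m k : ℕ}

lemma sigma_card (m k : ℕ) :
    ((PF m (k+1)).sigma (fun R => R)).card = (k+1) * (PF m (k+1)).card := by
  rw [Finset.card_sigma]
  have : ∀ R ∈ PF m (k+1), R.card = k + 1 := by
    intro R hR
    simp only [PF, Finset.mem_filter, Finset.mem_univ, true_and] at hR
    exact hR.2
  rw [Finset.sum_congr rfl this, Finset.sum_const, smul_eq_mul, mul_comm]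

lemma PF_rec (m k : ℕ) :
    (PF (m+1) (k+1)).card = (PF m k).card + (k+1) * (PF m (k+1)).card := by
  rw [← Finset.card_filter_add_card_filter_not
    (fun Q => ({0} : Finset (Fin (m+1))) ∈ Q) (s := PF (m+1) (k+1))]
  rw [claim1]
  congr 1
  rw [← sigma_card, ← claim2]

lemma stirling2_eq_st : ∀ m k, stirling2 m k = st m k := by
  intro m
  induction m with
  | zero =>
    intro k
    cases k with
    | zero => rw [stirling2_eq_card, PF_zero_zero]; rfl
    | succ k => rw [stirling2_eq_card, PF_zero_succ]; rfl
  | succ m ih =>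
    intro k
    cases k with
    | zero => rw [stirling2_eq_card, PF_succ_zero]; rfl
    | succ k =>
      rw [stirling2_eq_card, PF_rec, ← stirling2_eq_card, ← stirling2_eq_card, ih, ih]
      rfl

end Final

theorem statement17 (n : ℕ) :
    TNN (Matrix.of fun m k : Fin (n+1) => (stirling2 (m : ℕ) (k : ℕ) : ℝ)) := by
  have h : (Matrix.of fun m k : Fin (n+1) => (stirling2 (m : ℕ) (k : ℕ) : ℝ)) = Sm n := by
    ext m k
    show ((stirling2 (m : ℕ) (k : ℕ) : ℕ) : ℝ) = ((st (m : ℕ) (k : ℕ) : ℕ) : ℝ)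
    rw [stirling2_eq_st]
  rw [h]
  exact TNN_Sm n
end

section
/- For every n, the (n+1)×(n+1) matrix whose (m,k) entry (0 ≤ m,k ≤ n) is the unsigned Stirling number of the first kind c(m,k) is totally non-negative. -/
open Polynomial Finset

/-- The number of cycles (orbits) of a permutation of `Fin m`: the number of
nontrivial cycles in its cycle decomposition plus the number of fixed points. -/
def cycleCount {m : ℕ} (σ : Equiv.Perm (Fin m)) : ℕ :=
  σ.cycleType.card + (Finset.univ.filter fun x => σ x = x).card

/-- `stirling1 m k`, the unsigned Stirling number of the first kind: the number of
permutations of an `m`-element set having exactly `k` cycles. -/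
noncomputable def stirling1 (m k : ℕ) : ℕ :=
  Nat.card {σ : Equiv.Perm (Fin m) // cycleCount σ = k}

open Equiv Equiv.Perm

variable {α : Type*} [Fintype α] [DecidableEq α]

/-- Merging a fixed point `a` into the cycle `c` through `b` gives a cycle. -/
lemma isCycle_swap_mul_of_fixed {c : Perm α} (hc : c.IsCycle) {a b : α}
    (hab : a ≠ b) (ha : c a = a) (hb : c b ≠ b) : (Equiv.swap a b * c).IsCycle := by
  set g := Equiv.swap a b * c with hg
  have hga : g a = b := by simp [hg, ha]
  have hkey : ∀ k : ℕ, g.SameCycle a ((c ^ k) b) := by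
    intro k
    induction k with
    | zero => exact ⟨1, by simpa [hg, ha] using rfl⟩
    | succ k ih =>
      set z := (c ^ k) b with hz
      have h1 : (c ^ (k+1)) b = c z := by rw [hz, ← Perm.mul_apply, ← pow_succ']
      rw [h1]
      by_cases hcz : c z = b
      · rw [hcz]
        exact ⟨1, by simpa [hg, ha] using rfl⟩
      · have hcza : c z ≠ a := by
          intro h
          have hza : z = a := c.injective (by rw [h, ha])
          have hzs : z ∈ c.support := by
            rw [hz]
            exact Perm.pow_apply_mem_support.mpr (Perm.mem_support.mpr hb)
          rw [hza] at hzs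
          exact (Perm.mem_support.mp hzs) ha
        have hgz : g z = c z := by
          rw [hg, Perm.mul_apply, Equiv.swap_apply_of_ne_of_ne hcza hcz]
        rw [← hgz]
        exact ih.trans ⟨1, by rw [zpow_one]⟩
  refine ⟨a, by rw [hga]; exact hab.symm, fun y hy => ?_⟩
  by_cases hya : y = a
  · exact hya ▸ SameCycle.refl g a
  · have hcy : c y ≠ y := by
      intro hcyy
      apply hy
      by_cases hyb : y = b
      · exact absurd (hyb ▸ hcyy) hb
      · rw [hg, Perm.mul_apply, hcyy, Equiv.swap_apply_of_ne_of_ne hya hyb]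
    obtain ⟨i, _, hi⟩ := (hc.sameCycle hb hcy).exists_pow_eq'
    exact hkey i |>.trans (by rw [hi])

lemma support_swap_mul_of_fixed {c : Perm α} {a b : α}
    (hab : a ≠ b) (ha : c a = a) (hb : c b ≠ b) :
    (Equiv.swap a b * c).support = insert a c.support := by
  ext y
  simp only [Perm.mem_support, Finset.mem_insert]
  by_cases hya : y = a
  · subst hya; simp [ha, hab.symm]
  · by_cases hyb : y = b
    · subst hyb
      have hcba : c y ≠ a := fun h => hb (by rw [← ha] at h; rw [c.injective h, ha])
      constructor
      · intro _; exact Or.inr hb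
      · intro _
        by_cases h : c y = y
        · exact absurd h hb
        · rw [Perm.mul_apply]
          rw [Equiv.swap_apply_of_ne_of_ne hcba h]
          exact h
    · rw [Perm.mul_apply]
      constructor
      · intro h
        refine Or.inr fun hcy => h ?_
        rw [hcy, Equiv.swap_apply_of_ne_of_ne hya hyb]
      · intro h
        rcases h with h | h
        · exact absurd h hya
        · intro hh
          have : c y = Equiv.swap a b y := by
            have := congrArg (Equiv.swap a b) hh
            rwa [Equiv.swap_apply_self] at this
          rw [Equiv.swap_apply_of_ne_of_ne hya hyb] at this
          exact h this

lemma cycleType_swap_mul_of_not_fixed (τ : Perm α) {a b : α} (hab : a ≠ b)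
    (ha : τ a = a) (hb : τ b ≠ b) :
    Multiset.card (Equiv.swap a b * τ).cycleType = Multiset.card τ.cycleType ∧
    (Equiv.swap a b * τ).cycleType.sum = τ.cycleType.sum + 1 := by
  classical
  set σ := Equiv.swap a b * τ with hσ
  set c := τ.cycleOf b with hcdef
  have hc_mem : c ∈ τ.cycleFactorsFinset :=
    cycleOf_mem_cycleFactorsFinset_iff.mpr (Perm.mem_support.mpr hb)
  have hc_cyc : c.IsCycle := isCycle_cycleOf τ hb
  have hc_agree : ∀ x ∈ c.support, c x = τ x := (mem_cycleFactorsFinset_iff.mp hc_mem).2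
  have hasupτ : a ∉ τ.support := by simp [Perm.mem_support, ha]
  have hca : c a = a := by
    have : a ∉ c.support := fun h => hasupτ (support_cycleOf_le τ b h)
    simpa [Perm.mem_support, not_not] using this
  have hcb : c b ≠ b := by rw [hcdef, cycleOf_apply_self]; exact hb
  have hacs : a ∉ c.support := by simp [Perm.mem_support, hca]
  set g := Equiv.swap a b * c with hgdef
  have hg_cyc : g.IsCycle := isCycle_swap_mul_of_fixed hc_cyc hab hca hcb
  have hg_supp : g.support = insert a c.support := support_swap_mul_of_fixed hab hca hcb
  have hg_mem : g ∈ σ.cycleFactorsFinset := by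
    rw [mem_cycleFactorsFinset_iff]
    refine ⟨hg_cyc, fun x hx => ?_⟩
    rw [hg_supp, Finset.mem_insert] at hx
    rcases hx with hxa | hx
    · rw [hxa]
      show (Equiv.swap a b * c) a = (Equiv.swap a b * τ) a
      rw [Perm.mul_apply, Perm.mul_apply, hca, ha]
    · show (Equiv.swap a b * c) x = (Equiv.swap a b * τ) x
      rw [Perm.mul_apply, Perm.mul_apply, hc_agree x hx]
  have hfixa : (τ * c⁻¹) a = a := by
    have hinv : c⁻¹ a = a := by nth_rewrite 1 [← hca]; exact c.symm_apply_apply a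
    rw [Perm.mul_apply, hinv, ha]
  have hfixb : (τ * c⁻¹) b = b := by
    have hmem : c⁻¹ b ∈ c.support := by
      rw [← Equiv.Perm.support_inv]
      exact Perm.apply_mem_support.mpr (by rwa [Equiv.Perm.support_inv, Perm.mem_support])
    rw [Perm.mul_apply, ← hc_agree _ hmem]; exact c.apply_symm_apply b
  have hdis : (Equiv.swap a b).Disjoint (τ * c⁻¹) := by
    intro x
    by_cases hx : x = a ∨ x = b
    · rcases hx with rfl | rfl
      · exact Or.inr hfixa
      · exact Or.inr hfixb
    · push_neg at hx
      exact Or.inl (Equiv.swap_apply_of_ne_of_ne hx.1 hx.2)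
  have hd : σ * g⁻¹ = τ * c⁻¹ := by
    have h1 : σ * g⁻¹ = Equiv.swap a b * (τ * c⁻¹) * Equiv.swap a b := by
      rw [hσ, hgdef, mul_inv_rev, Equiv.swap_inv]
      group
    rw [h1, hdis.commute.eq, mul_assoc, mul_assoc, Equiv.swap_mul_self, mul_one]
  have hsub1 : (σ * g⁻¹).cycleType + g.cycleType = σ.cycleType := by
    rw [cycleType_mul_inv_mem_cycleFactorsFinset_eq_sub hg_mem]
    exact tsub_add_cancel_of_le (cycleType_le_of_mem_cycleFactorsFinset hg_mem)
  have hsub2 : (τ * c⁻¹).cycleType + c.cycleType = τ.cycleType := by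
    rw [cycleType_mul_inv_mem_cycleFactorsFinset_eq_sub hc_mem]
    exact tsub_add_cancel_of_le (cycleType_le_of_mem_cycleFactorsFinset hc_mem)
  have hgct : g.cycleType = {c.support.card + 1} := by
    rw [hg_cyc.cycleType, hg_supp, Finset.card_insert_of_notMem hacs]
  have hcct : c.cycleType = {c.support.card} := by rw [hc_cyc.cycleType]
  rw [← hsub1, hd, ← hsub2, hgct, hcct]
  constructor <;> simp <;> omega

lemma filter_fixed_card (σ : Perm α) :
    (Finset.univ.filter fun x => σ x = x).card = Fintype.card α - σ.support.card := by
  have h : (Finset.univ.filter fun x => σ x = x) = σ.supportᶜ := by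
    ext x
    simp [Perm.mem_support, not_not]
  rw [h, Finset.card_compl]

lemma cycleCount_eq (σ : Perm (Fin m)) :
    cycleCount σ = Multiset.card σ.cycleType + (m - σ.cycleType.sum) := by
  rw [cycleCount, filter_fixed_card, sum_cycleType, Fintype.card_fin]

lemma cycleCount_swap_mul {m : ℕ} (τ : Perm (Fin m)) {a b : Fin m} (hab : a ≠ b)
    (ha : τ a = a) : cycleCount (Equiv.swap a b * τ) + 1 = cycleCount τ := by
  have hsum := sum_cycleType τ
  have hsum2 := sum_cycleType (Equiv.swap a b * τ)
  have hsle : τ.support.card ≤ m := by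
    simpa using Finset.card_le_univ τ.support
  have hsle2 : (Equiv.swap a b * τ).support.card ≤ m := by
    simpa using Finset.card_le_univ (Equiv.swap a b * τ).support
  by_cases hb : τ b = b
  · have hdis : (Equiv.swap a b).Disjoint τ := by
      intro x
      by_cases hx : x = a ∨ x = b
      · rcases hx with rfl | rfl
        · exact Or.inr ha
        · exact Or.inr hb
      · push_neg at hx
        exact Or.inl (Equiv.swap_apply_of_ne_of_ne hx.1 hx.2)
    have hct : (Equiv.swap a b * τ).cycleType = {2} + τ.cycleType := by
      rw [Equiv.Perm.Disjoint.cycleType_mul hdis, (isCycle_swap hab).cycleType, card_support_swap hab]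
    rw [cycleCount_eq, cycleCount_eq, hct]
    rw [hct] at hsum2
    simp only [Multiset.card_add, Multiset.sum_add] at *
    simp only [Multiset.card_singleton, Multiset.sum_singleton] at *
    omega
  · obtain ⟨hcard, hsum'⟩ := cycleType_swap_mul_of_not_fixed τ hab ha hb
    rw [cycleCount_eq, cycleCount_eq, hcard, hsum']
    rw [hsum'] at hsum2
    omega

/-- the equiv sending `x : Fin m` to `x.succ` in the subtype of nonzero elements -/
def succEquiv (m : ℕ) : Fin m ≃ {x : Fin (m + 1) // x ≠ 0} where
  toFun x := ⟨x.succ, Fin.succ_ne_zero x⟩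
  invFun y := (y.1).pred y.2
  left_inv x := by simp
  right_inv y := by simp

lemma decomposeFin_zero_eq_extend {m : ℕ} (e : Perm (Fin m)) :
    Equiv.Perm.decomposeFin.symm (0, e) = e.extendDomain (succEquiv m) := by
  apply Equiv.ext
  intro x
  refine Fin.cases ?_ (fun y => ?_) x
  · rw [Equiv.Perm.decomposeFin_symm_apply_zero]
    rw [Equiv.Perm.extendDomain_apply_not_subtype]
    simp
  · rw [Equiv.Perm.decomposeFin_symm_apply_succ, Equiv.swap_self]
    have h2 := e.extendDomain_apply_image (succEquiv m) y
    simpa [succEquiv] using h2.symm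

lemma cycleCount_decomposeFin {m : ℕ} (p : Fin (m + 1)) (e : Perm (Fin m)) :
    cycleCount (Equiv.Perm.decomposeFin.symm (p, e)) =
      cycleCount e + (if p = 0 then 1 else 0) := by
  have htau : cycleCount (Equiv.Perm.decomposeFin.symm (0, e)) = cycleCount e + 1 := by
    rw [decomposeFin_zero_eq_extend, cycleCount_eq, cycleCount_eq,
      Equiv.Perm.cycleType_extendDomain]
    have := sum_cycleType e
    have : e.cycleType.sum ≤ m := by
      rw [sum_cycleType]
      simpa using Finset.card_le_univ e.support
    omega
  by_cases hp : p = 0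
  · subst hp; simpa using htau
  · have hswap : Equiv.Perm.decomposeFin.symm (p, e) =
        Equiv.swap 0 p * Equiv.Perm.decomposeFin.symm (0, e) := by
      ext x
      refine Fin.cases ?_ (fun y => ?_) x
      · simp [Equiv.Perm.decomposeFin_symm_apply_zero]
      · rw [Equiv.Perm.decomposeFin_symm_apply_succ, Perm.mul_apply,
          Equiv.Perm.decomposeFin_symm_apply_succ, Equiv.swap_self]
        rfl
    have hfix : (Equiv.Perm.decomposeFin.symm (0, e)) 0 = 0 :=
      Equiv.Perm.decomposeFin_symm_apply_zero 0 e
    have := cycleCount_swap_mul (Equiv.Perm.decomposeFin.symm (0, e))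
      (Ne.symm hp) hfix
    rw [← hswap] at this
    rw [if_neg hp]
    omega

lemma stirling1_card (m k : ℕ) :
    stirling1 m k = Fintype.card {σ : Equiv.Perm (Fin m) // cycleCount σ = k} :=
  Nat.card_eq_fintype_card

lemma stirling1_zero (k : ℕ) : stirling1 0 k = if k = 0 then 1 else 0 := by
  have hcc : cycleCount (1 : Perm (Fin 0)) = 0 := by
    rw [cycleCount, Equiv.Perm.cycleType_one]
    simp
  rw [stirling1_card]
  by_cases hk : k = 0
  · subst hk
    rw [if_pos rfl]
    rw [Fintype.card_eq_one_iff]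
    refine ⟨⟨1, hcc⟩, fun y => ?_⟩
    ext x
    exact x.elim0
  · rw [if_neg hk]
    rw [Fintype.card_eq_zero_iff]
    refine ⟨fun y => hk ?_⟩
    have h1 : y.1 = 1 := by ext x; exact x.elim0
    rw [← y.2, h1, hcc]

lemma stirling1_succ (m k : ℕ) :
    stirling1 (m + 1) k = m * stirling1 m k +
      (if k = 0 then 0 else stirling1 m (k - 1)) := by
  classical
  rw [stirling1_card]
  have e1 : {σ : Equiv.Perm (Fin (m+1)) // cycleCount σ = k} ≃
      {x : Fin (m+1) × Equiv.Perm (Fin m) //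
        cycleCount x.2 + (if x.1 = 0 then 1 else 0) = k} := by
    refine (Equiv.subtypeEquiv Equiv.Perm.decomposeFin ?_)
    intro σ
    rw [← cycleCount_decomposeFin (Equiv.Perm.decomposeFin σ).1
      (Equiv.Perm.decomposeFin σ).2]
    rw [Prod.mk.eta, Equiv.symm_apply_apply]
  have e2 : {x : Fin (m+1) × Equiv.Perm (Fin m) //
        cycleCount x.2 + (if x.1 = 0 then 1 else 0) = k} ≃
      Σ p : Fin (m+1), {e : Equiv.Perm (Fin m) //
        cycleCount e + (if p = 0 then 1 else 0) = k} :=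
    ⟨fun x => ⟨x.1.1, x.1.2, x.2⟩, fun s => ⟨(s.1, s.2.1), s.2.2⟩,
      fun x => rfl, fun s => rfl⟩
  rw [Fintype.card_congr (e1.trans e2), Fintype.card_sigma, Fin.sum_univ_succ]
  have hz : Fintype.card {e : Equiv.Perm (Fin m) //
      cycleCount e + (if (0 : Fin (m+1)) = 0 then 1 else 0) = k} =
      if k = 0 then 0 else stirling1 m (k - 1) := by
    by_cases hk : k = 0
    · subst hk
      have hcard : Fintype.card {e : Equiv.Perm (Fin m) //
          cycleCount e + (if (0 : Fin (m+1)) = 0 then 1 else 0) = 0} = 0 := by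
        rw [Fintype.card_eq_zero_iff]
        exact ⟨fun y => absurd y.2 (by simp)⟩
      rw [hcard]
      simp
    · obtain ⟨k', rfl⟩ := Nat.exists_eq_succ_of_ne_zero hk
      rw [if_neg hk, stirling1_card]
      apply Fintype.card_congr
      apply Equiv.subtypeEquivRight
      intro e
      simp
  have hs : ∀ q : Fin m, Fintype.card {e : Equiv.Perm (Fin m) //
      cycleCount e + (if (q.succ : Fin (m+1)) = 0 then 1 else 0) = k} =
      stirling1 m k := by
    intro q
    rw [stirling1_card]
    apply Fintype.card_congr
    apply Equiv.subtypeEquivRight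
    intro e
    simp [Fin.succ_ne_zero q]
  rw [hz]
  have : ∀ q : Fin m, (fun p : Fin (m+1) => Fintype.card {e : Equiv.Perm (Fin m) //
      cycleCount e + (if p = 0 then 1 else 0) = k}) q.succ = stirling1 m k := hs
  rw [Finset.sum_congr rfl (fun q _ => hs q), Finset.sum_const, Finset.card_univ,
    Fintype.card_fin, smul_eq_mul]
  omega

lemma tnn_rowop {N : ℕ} (A : Matrix (Fin N) (Fin N) ℝ) (hA : TNN A)
    (i j : Fin N) (hij : (j : ℕ) = (i : ℕ) + 1) (c : ℝ) (hc : 0 ≤ c) :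
    TNN (Matrix.of fun m k => A m k + if m = j then c * A i k else 0) := by
  intro r ρ γ hρ hγ
  set B := Matrix.of fun m k => A m k + if m = j then c * A i k else 0 with hB
  by_cases hj : ∃ t, ρ t = j
  · obtain ⟨t0, ht0⟩ := hj
    have hBsub : B.submatrix ρ γ =
        (A.submatrix ρ γ).updateRow t0
          ((fun j' => A j (γ j')) + fun j' => c * A i (γ j')) := by
      ext t j'
      by_cases ht : t = t0
      · subst ht
        rw [Matrix.updateRow_self]
        simp [hB, Matrix.submatrix_apply, ht0, Pi.add_apply]
      · rw [Matrix.updateRow_ne ht]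
        have : ρ t ≠ j := fun h => ht (hρ.injective (h.trans ht0.symm))
        simp [hB, Matrix.submatrix_apply, this]
    rw [hBsub, Matrix.det_updateRow_add]
    have h1 : (A.submatrix ρ γ).updateRow t0 (fun j' => A j (γ j')) =
        A.submatrix ρ γ := by
      have : (fun j' => A j (γ j')) = (A.submatrix ρ γ) t0 := by
        funext j'; simp [Matrix.submatrix_apply, ht0]
      rw [this, Matrix.updateRow_eq_self]
    have h2 : (fun j' => c * A i (γ j')) = c • fun j' => A i (γ j') := by
      funext j'; simp
    rw [h1, h2, Matrix.det_updateRow_smul]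
    have hmain : 0 ≤ ((A.submatrix ρ γ).updateRow t0 fun j' => A i (γ j')).det := by
      by_cases hi : ∃ t, ρ t = i
      · obtain ⟨t1, ht1⟩ := hi
        have ht10 : t1 ≠ t0 := by
          intro h; rw [h, ht0] at ht1
          exact absurd (congrArg (Fin.val) ht1) (by omega)
        have hrow : ((A.submatrix ρ γ).updateRow t0 fun j' => A i (γ j')) t1 =
            ((A.submatrix ρ γ).updateRow t0 fun j' => A i (γ j')) t0 := by
          rw [Matrix.updateRow_self, Matrix.updateRow_ne ht10]
          funext j'; simp [Matrix.submatrix_apply, ht1]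
        rw [Matrix.det_zero_of_row_eq ht10 hrow]
      · push_neg at hi
        set ρ' := Function.update ρ t0 i with hρ'
        have key : ∀ u, (ρ' u : ℕ) = if u = t0 then (i : ℕ) else (ρ u : ℕ) := by
          intro u
          by_cases hu : u = t0
          · subst hu; simp [hρ']
          · rw [if_neg hu, hρ', Function.update_of_ne hu]
        have hjval : (ρ t0 : ℕ) = (i : ℕ) + 1 := by rw [ht0]; exact hij
        have hv : ∀ u, (ρ u : ℕ) ≠ (i : ℕ) := fun u h => hi u (Fin.ext h)
        have hmono : StrictMono ρ' := by
          intro s t hst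
          have h1 : (ρ s : ℕ) < (ρ t : ℕ) := hρ hst
          rw [Fin.lt_def]
          simp only [key]
          split_ifs with h h' h'
          · exact absurd (h.trans h'.symm) (ne_of_lt hst)
          · subst h; omega
          · subst h'
            have := hv s
            omega
          · exact h1
        have hsubeq : ((A.submatrix ρ γ).updateRow t0 fun j' => A i (γ j')) =
            A.submatrix ρ' γ := by
          ext t j'
          by_cases ht : t = t0
          · subst ht
            rw [Matrix.updateRow_self]
            simp [Matrix.submatrix_apply, hρ']
          · rw [Matrix.updateRow_ne ht]
            simp [Matrix.submatrix_apply, hρ', Function.update_of_ne ht]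
        rw [hsubeq]
        exact hA r ρ' γ hmono hγ
    nlinarith [hA r ρ γ hρ hγ, hmain]
  · have : B.submatrix ρ γ = A.submatrix ρ γ := by
      ext t j'
      have : ρ t ≠ j := fun h => hj ⟨t, h⟩
      simp [hB, Matrix.submatrix_apply, this]
    rw [this]; exact hA r ρ γ hρ hγ

lemma tnn_block {N : ℕ} (f : ℕ → ℕ → ℝ)
    (hA : TNN (Matrix.of fun m k : Fin N => f m k)) :
    TNN (Matrix.of fun m k : Fin (N + 1) =>
      if (m : ℕ) = 0 then (if (k : ℕ) = 0 then 1 else 0)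
      else if (k : ℕ) = 0 then 0 else f ((m : ℕ) - 1) ((k : ℕ) - 1)) := by
  set B := Matrix.of fun m k : Fin (N + 1) =>
      if (m : ℕ) = 0 then (if (k : ℕ) = 0 then (1:ℝ) else 0)
      else if (k : ℕ) = 0 then 0 else f ((m : ℕ) - 1) ((k : ℕ) - 1) with hB
  intro r ρ γ hρ hγ
  match r with
  | 0 => simp [Matrix.det_fin_zero]
  | r + 1 =>
    by_cases h0ρ : (ρ 0 : ℕ) = 0 <;> by_cases h0γ : (γ 0 : ℕ) = 0
    · -- expand along first column
      rw [Matrix.det_succ_column_zero]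
      have hcol : ∀ i, (B.submatrix ρ γ) i 0 = if i = 0 then 1 else 0 := by
        intro i
        by_cases hi : i = 0
        · subst hi; simp [hB, Matrix.submatrix_apply, h0ρ, h0γ, Fin.val_eq_zero_iff.mp h0ρ, Fin.val_eq_zero_iff.mp h0γ]
        · have : (ρ i : ℕ) ≠ 0 := by
            have : ρ 0 < ρ i := hρ (Fin.pos_of_ne_zero hi)
            omega
          simp [hB, Matrix.submatrix_apply, this, hi, h0γ, Fin.val_ne_zero_iff.mp this, Fin.val_eq_zero_iff.mp h0γ]
      rw [Finset.sum_eq_single 0]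
      · rw [hcol 0, if_pos rfl]
        simp only [Fin.val_zero, pow_zero, one_mul, mul_one]
        -- remaining minor
        have hρpos : ∀ i : Fin r, 1 ≤ (ρ i.succ : ℕ) := by
          intro i
          have : ρ 0 < ρ i.succ := hρ (Fin.succ_pos i)
          omega
        have hγpos : ∀ i : Fin r, 1 ≤ (γ i.succ : ℕ) := by
          intro i
          have : γ 0 < γ i.succ := hγ (Fin.succ_pos i)
          omega
        set ρ' : Fin r → Fin N := fun i => ⟨(ρ i.succ : ℕ) - 1, by
          have := (ρ i.succ).2; have := hρpos i; omega⟩ with hρ'd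
        set γ' : Fin r → Fin N := fun i => ⟨(γ i.succ : ℕ) - 1, by
          have := (γ i.succ).2; have := hγpos i; omega⟩ with hγ'd
        have hsub : (B.submatrix ρ γ).submatrix (Fin.succAbove 0) Fin.succ =
            (Matrix.of fun m k : Fin N => f m k).submatrix ρ' γ' := by
          ext a b
          have h1 : (0 : Fin (r+1)).succAbove a = a.succ := rfl
          simp only [Matrix.submatrix_apply, h1]
          have hr1 : (ρ a.succ : ℕ) ≠ 0 := by have := hρpos a; omega
          have hc1 : (γ b.succ : ℕ) ≠ 0 := by have := hγpos b; omega
          simp [hB, hr1, hc1, hρ'd, hγ'd, Fin.val_ne_zero_iff.mp hr1, Fin.val_ne_zero_iff.mp hc1]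
        rw [hsub]
        apply hA r ρ' γ'
        · intro s t hst
          have h1 : ρ s.succ < ρ t.succ := hρ (Fin.succ_lt_succ_iff.mpr hst)
          rw [Fin.lt_def] at h1 ⊢
          simp only [hρ'd]
          have := hρpos s
          omega
        · intro s t hst
          have h1 : γ s.succ < γ t.succ := hγ (Fin.succ_lt_succ_iff.mpr hst)
          rw [Fin.lt_def] at h1 ⊢
          simp only [hγ'd]
          have := hγpos s
          omega
      · intro i _ hi
        rw [hcol i, if_neg hi]
        ring
      · intro h; exact absurd (Finset.mem_univ 0) h
    · -- row 0 of the minor is zero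
      have : ∀ j', (B.submatrix ρ γ) 0 j' = 0 := by
        intro j'
        have hγj : (γ j' : ℕ) ≠ 0 := by
          rcases Nat.eq_zero_or_pos (j' : ℕ) with h | h
          · have : j' = 0 := Fin.ext h
            rw [this]; exact h0γ
          · have : γ 0 < γ j' := hγ (by rwa [Fin.lt_def, Fin.val_zero])
            omega
        simp [hB, Matrix.submatrix_apply, h0ρ, hγj, Fin.val_eq_zero_iff.mp h0ρ, Fin.val_ne_zero_iff.mp hγj]
      rw [Matrix.det_eq_zero_of_row_eq_zero 0 this]
    · -- column 0 of the minor is zero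
      have : ∀ i', (B.submatrix ρ γ) i' 0 = 0 := by
        intro i'
        have hρi : (ρ i' : ℕ) ≠ 0 := by
          rcases Nat.eq_zero_or_pos (i' : ℕ) with h | h
          · have : i' = 0 := Fin.ext h
            rw [this]; exact h0ρ
          · have : ρ 0 < ρ i' := hρ (by rwa [Fin.lt_def, Fin.val_zero])
            omega
        simp [hB, Matrix.submatrix_apply, hρi, h0γ, Fin.val_ne_zero_iff.mp hρi, Fin.val_eq_zero_iff.mp h0γ]
      rw [Matrix.det_eq_zero_of_column_eq_zero 0 this]
    · -- all indices positive
      have hρpos : ∀ i, 1 ≤ (ρ i : ℕ) := by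
        intro i
        rcases Nat.eq_zero_or_pos (i : ℕ) with h | h
        · have : i = 0 := Fin.ext h
          rw [this]; omega
        · have : ρ 0 < ρ i := hρ (by rwa [Fin.lt_def, Fin.val_zero])
          omega
      have hγpos : ∀ i, 1 ≤ (γ i : ℕ) := by
        intro i
        rcases Nat.eq_zero_or_pos (i : ℕ) with h | h
        · have : i = 0 := Fin.ext h
          rw [this]; omega
        · have : γ 0 < γ i := hγ (by rwa [Fin.lt_def, Fin.val_zero])
          omega
      set ρ' : Fin (r+1) → Fin N := fun i => ⟨(ρ i : ℕ) - 1, by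
        have := (ρ i).2; have := hρpos i; omega⟩ with hρ'd
      set γ' : Fin (r+1) → Fin N := fun i => ⟨(γ i : ℕ) - 1, by
        have := (γ i).2; have := hγpos i; omega⟩ with hγ'd
      have hsub : B.submatrix ρ γ = (Matrix.of fun m k : Fin N => f m k).submatrix ρ' γ' := by
        ext a b
        have hr1 : (ρ a : ℕ) ≠ 0 := by have := hρpos a; omega
        have hc1 : (γ b : ℕ) ≠ 0 := by have := hγpos b; omega
        simp [hB, Matrix.submatrix_apply, hr1, hc1, hρ'd, hγ'd, Fin.val_ne_zero_iff.mp hr1, Fin.val_ne_zero_iff.mp hc1]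
      rw [hsub]
      apply hA (r+1) ρ' γ'
      · intro s t hst
        have h1 : ρ s < ρ t := hρ hst
        rw [Fin.lt_def] at h1 ⊢
        simp only [hρ'd]
        have := hρpos s
        omega
      · intro s t hst
        have h1 : γ s < γ t := hγ hst
        rw [Fin.lt_def] at h1 ⊢
        simp only [hγ'd]
        have := hγpos s
        omega

noncomputable def Mst (N j : ℕ) : Matrix (Fin N) (Fin N) ℝ :=
  Matrix.of fun m k : Fin N =>
    if (m : ℕ) ≤ j then (stirling1 m k : ℝ)
    else if (k : ℕ) = 0 then 0 else (stirling1 ((m : ℕ) - 1) ((k : ℕ) - 1) : ℝ)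

lemma tnn_Mst_one {N : ℕ}
    (ih : TNN (Matrix.of fun m k : Fin N => (stirling1 m k : ℝ))) :
    TNN (Mst (N + 1) 1) := by
  have h := tnn_block (fun a b => (stirling1 a b : ℝ)) ih
  have heq : (Matrix.of fun m k : Fin (N + 1) =>
      if (m : ℕ) = 0 then (if (k : ℕ) = 0 then 1 else 0)
      else if (k : ℕ) = 0 then 0
      else ((stirling1 ((m : ℕ) - 1) ((k : ℕ) - 1) : ℝ))) = Mst (N + 1) 1 := by
    ext m k
    simp only [Matrix.of_apply, Mst]
    by_cases hm0 : (m : ℕ) = 0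
    · by_cases hk : (k : ℕ) = 0 <;> simp [hm0, hk, stirling1_zero]
    · by_cases hm1 : (m : ℕ) = 1
      · have hstir1 : stirling1 1 ((k : ℕ)) = if (k : ℕ) = 0 then 0
            else stirling1 0 ((k : ℕ) - 1) := by
          simpa using stirling1_succ 0 (k : ℕ)
        have hstir10 : stirling1 1 0 = 0 := by simpa using stirling1_succ 0 0
        by_cases hk : (k : ℕ) = 0 <;> simp [hm0, hm1, hk, hstir1, hstir10]
      · have hle : ¬((m : ℕ) ≤ 1) := by omega
        simp [hm0, hle]
  rw [heq] at h
  exact h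

lemma tnn_Mst_step {N j : ℕ} (hj : 1 ≤ j) (h : TNN (Mst (N + 1) j)) :
    TNN (Mst (N + 1) (j + 1)) := by
  by_cases hjN : j + 1 ≤ N
  · have hlt1 : j < N + 1 := by omega
    have hlt2 : j + 1 < N + 1 := by omega
    have h2 := tnn_rowop (Mst (N + 1) j) h ⟨j, hlt1⟩ ⟨j + 1, hlt2⟩ rfl (j : ℝ)
      (by positivity)
    have heq : (Matrix.of fun m k => Mst (N + 1) j m k +
        if m = (⟨j + 1, hlt2⟩ : Fin (N + 1)) then (j : ℝ) * Mst (N + 1) j ⟨j, hlt1⟩ k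
        else 0) = Mst (N + 1) (j + 1) := by
      ext m k
      simp only [Matrix.of_apply, Mst]
      by_cases hm : m = (⟨j + 1, hlt2⟩ : Fin (N + 1))
      · rw [if_pos hm]
        have hmv : (m : ℕ) = j + 1 := by rw [hm]
        have hjj : ((⟨j, hlt1⟩ : Fin (N + 1)) : ℕ) = j := rfl
        simp only [hmv, hjj, Nat.add_sub_cancel]
        rw [if_neg (by omega : ¬(j + 1 ≤ j)), if_pos (le_refl j),
          if_pos (le_refl (j+1))]
        rw [stirling1_succ j (k : ℕ)]
        by_cases hk : (k : ℕ) = 0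
        · rw [if_pos hk, if_pos hk]
          push_cast
          ring
        · rw [if_neg hk, if_neg hk]
          push_cast
          ring
      · rw [if_neg hm, add_zero]
        have hmv : (m : ℕ) ≠ j + 1 := fun hc => hm (Fin.ext hc)
        by_cases hle : (m : ℕ) ≤ j
        · rw [if_pos hle, if_pos (show (m : ℕ) ≤ j + 1 by omega)]
        · rw [if_neg hle, if_neg (show ¬((m : ℕ) ≤ j + 1) by omega)]
    rw [heq] at h2
    exact h2
  · have heq : Mst (N + 1) (j + 1) = Mst (N + 1) j := by
      ext m k
      have : (m : ℕ) ≤ j := by have := m.2; omega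
      simp only [Mst, Matrix.of_apply]
      rw [if_pos this, if_pos (by omega)]
    rw [heq]
    exact h

theorem tnn_stirling : ∀ N, TNN (Matrix.of fun m k : Fin N => (stirling1 m k : ℝ)) := by
  intro N
  induction N with
  | zero =>
    intro r ρ γ _ _
    match r with
    | 0 => simp [Matrix.det_fin_zero]
    | r + 1 => exact (ρ 0).elim0
  | succ N ih =>
    have hall : ∀ j, TNN (Mst (N + 1) (j + 1)) := by
      intro j
      induction j with
      | zero => exact tnn_Mst_one ih
      | succ j ihj => exact tnn_Mst_step (by omega) ihj
    have hfin : Mst (N + 1) (N + 1) = Matrix.of fun m k : Fin (N+1) => (stirling1 m k : ℝ) := by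
      ext m k
      simp only [Mst, Matrix.of_apply]
      rw [if_pos (by have := m.2; omega)]
    have := hall N
    rwa [hfin] at this

theorem statement18 (n : ℕ) :
    TNN (Matrix.of fun m k : Fin (n+1) => (stirling1 (m : ℕ) (k : ℕ) : ℝ)) := by
  exact tnn_stirling (n + 1)
end
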